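/- Let N ≥ 2 be an integer, x₀ ∈ ℂ, μ ∈ ℂ, and let h have form (F_N) at x₀ (h analytic on a punctured disc around x₀, h(x) + N(N−1)/(x−x₀)² extending analytically across x₀ with odd Taylor coefficients of orders 1, …, 2N−3 vanishing). Let u be a solution of u'' + h·u = 0 of the recessive form u(x) = (x−x₀)^N·φ(x), where φ is analytic at x₀, φ(x₀) = 1, and the odd-order Taylor coefficients of φ of orders 1, 3, …, 2N−1 vanish. Then the function h̃(x) := μ − h(x) − 2·(u'(x)/u(x))² has form (F_{N+1}) at x₀: h̃(x) + (N+1)N/(x−x₀)² extends analytically across x₀ and the odd-order Taylor coefficients of this extension of orders 1, 3, …, 2N−1 vanish. -/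

import Mathlib

open Filter Finset

variable {f g : ℂ → ℂ} {x : ℂ}

/-- Derivative of an analytic function is analytic. -/
lemma AnalyticAt.deriv' (hf : AnalyticAt ℂ f x) : AnalyticAt ℂ (deriv f) x := by
  obtain ⟨s, hs, hfs⟩ := hf.eventually_analyticAt.exists_mem
  exact (AnalyticOnNhd.deriv (fun y hy => hfs y hy)) x (mem_of_mem_nhds hs)

lemma itd_zero (n : ℕ) (x : ℂ) : iteratedDeriv n (fun _ => (0:ℂ)) x = 0 := by
  induction n generalizing x with
  | zero => simp
  | succ n ih => rw [iteratedDeriv_succ']; simp only [deriv_const']; exact ih x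

lemma itd_const (n : ℕ) (hn : n ≠ 0) (c x : ℂ) : iteratedDeriv n (fun _ => c) x = 0 := by
  obtain ⟨m, rfl⟩ := Nat.exists_eq_succ_of_ne_zero hn
  rw [iteratedDeriv_succ']; simp only [deriv_const']; exact itd_zero m x

/-- local linear combination rule for iterated derivatives. -/
lemma itd_comb (n : ℕ) (c d : ℂ) (hf : AnalyticAt ℂ f x) (hg : AnalyticAt ℂ g x) :
    iteratedDeriv n (fun y => c * f y + d * g y) x
      = c * iteratedDeriv n f x + d * iteratedDeriv n g x := by
  induction n generalizing f g with
  | zero => simp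
  | succ n ih =>
    rw [iteratedDeriv_succ', iteratedDeriv_succ', iteratedDeriv_succ']
    have hev : deriv (fun y => c * f y + d * g y)
        =ᶠ[nhds x] (fun y => c * deriv f y + d * deriv g y) := by
      filter_upwards [hf.eventually_analyticAt, hg.eventually_analyticAt] with y hfy hgy
      rw [deriv_fun_add, deriv_const_mul, deriv_const_mul]
      · exact hgy.differentiableAt
      · exact hfy.differentiableAt
      · exact (hfy.differentiableAt.const_mul c)
      · exact (hgy.differentiableAt.const_mul d)
    rw [hev.iteratedDeriv_eq n]
    exact ih hf.deriv' hg.deriv'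

lemma itd_add (n : ℕ) (hf : AnalyticAt ℂ f x) (hg : AnalyticAt ℂ g x) :
    iteratedDeriv n (fun y => f y + g y) x
      = iteratedDeriv n f x + iteratedDeriv n g x := by
  simpa using itd_comb n 1 1 hf hg

/-- Leibniz rule at a point for analytic functions. -/
lemma itd_mul (n : ℕ) (hf : AnalyticAt ℂ f x) (hg : AnalyticAt ℂ g x) :
    iteratedDeriv n (fun y => f y * g y) x
      = ∑ k ∈ range (n+1),
          (n.choose k : ℂ) * (iteratedDeriv k f x * iteratedDeriv (n-k) g x) := by
  induction n generalizing f g with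
  | zero => simp
  | succ n ih =>
    rw [iteratedDeriv_succ']
    have hev : deriv (fun y => f y * g y)
        =ᶠ[nhds x] (fun y => deriv f y * g y + f y * deriv g y) := by
      filter_upwards [hf.eventually_analyticAt, hg.eventually_analyticAt] with y hfy hgy
      exact deriv_mul hfy.differentiableAt hgy.differentiableAt
    rw [hev.iteratedDeriv_eq n]
    have := itd_add (f := fun y => deriv f y * g y) (g := fun y => f y * deriv g y) n
      (hf.deriv'.mul hg) (hf.mul hg.deriv')
    rw [this, ih hf.deriv' hg, ih hf hg.deriv']
    rw [Finset.sum_choose_succ_mul (fun i j => iteratedDeriv i f x * iteratedDeriv j g x) n]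
    rw [add_comm]
    congr 1
    · refine Finset.sum_congr rfl fun k hk => ?_
      have hk' : k ≤ n := Nat.lt_succ_iff.mp (Finset.mem_range.mp hk)
      rw [← iteratedDeriv_succ', Nat.sub_add_comm hk']
    · refine Finset.sum_congr rfl fun k hk => ?_
      rw [← iteratedDeriv_succ']

/-- iterated derivative of `(x - x₀) * f x` at `x₀`. -/
lemma itd_linfac (m : ℕ) (x₀ : ℂ) (hf : AnalyticAt ℂ f x₀) :
    iteratedDeriv (m+1) (fun y => (y - x₀) * f y) x₀
      = (m+1 : ℂ) * iteratedDeriv m f x₀ := by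
  induction m generalizing f with
  | zero =>
    simp only [iteratedDeriv_one, iteratedDeriv_zero]
    have : HasDerivAt (fun y => (y - x₀) * f y) (1 * f x₀ + (x₀ - x₀) * deriv f x₀) x₀ :=
      ((hasDerivAt_id x₀).sub_const x₀).mul hf.differentiableAt.hasDerivAt
    simpa using this.deriv
  | succ m ih =>
    rw [iteratedDeriv_succ']
    have hev : deriv (fun y => (y - x₀) * f y)
        =ᶠ[nhds x₀] (fun y => f y + (y - x₀) * deriv f y) := by
      filter_upwards [hf.eventually_analyticAt] with y hfy
      have : HasDerivAt (fun y => (y - x₀) * f y) (1 * f y + (y - x₀) * deriv f y) y :=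
        ((hasDerivAt_id y).sub_const x₀).mul hfy.differentiableAt.hasDerivAt
      simpa using this.deriv
    rw [hev.iteratedDeriv_eq (m+1)]
    rw [itd_add (g := fun y => (y - x₀) * deriv f y) (m+1) hf
      (((analyticAt_id.sub analyticAt_const)).mul hf.deriv')]
    rw [ih hf.deriv', ← iteratedDeriv_succ']
    push_cast; ring

lemma analyticAt_dslope' {x₀ : ℂ} (hf : AnalyticAt ℂ f x₀) :
    AnalyticAt ℂ (dslope f x₀) x₀ := by
  obtain ⟨p, hp⟩ := hf
  exact ⟨p.fslope, hp.has_fpower_series_dslope_fslope⟩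

lemma ev_of_punctured {F G : ℂ → ℂ} {x₀ : ℂ}
    (h1 : ∀ᶠ y in nhdsWithin x₀ {x₀}ᶜ, F y = G y) (h2 : F x₀ = G x₀) :
    F =ᶠ[nhds x₀] G := by
  have : ∀ᶠ y in (nhdsWithin x₀ {x₀}ᶜ ⊔ pure x₀), F y = G y :=
    Filter.eventually_sup.mpr ⟨h1, by simpa using h2⟩
  rwa [nhdsNE_sup_pure] at this
theorem stmt_8 (N : ℕ) (hN : 2 ≤ N) (x₀ μ : ℂ)
    (h : ℂ → ℂ) (r : ℝ) (hr : 0 < r)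
    (hh : AnalyticOnNhd ℂ h (Metric.ball x₀ r \ {x₀}))
    (g : ℂ → ℂ) (hg : AnalyticAt ℂ g x₀)
    (hgh : ∀ x ∈ Metric.ball x₀ r \ {x₀},
      g x = h x + (N * (N - 1) : ℂ) / (x - x₀) ^ 2)
    (hgodd : ∀ k : ℕ, Odd k → (k : ℤ) ≤ 2 * (N : ℤ) - 3 → iteratedDeriv k g x₀ = 0)
    (φ : ℂ → ℂ) (hφ : AnalyticAt ℂ φ x₀) (hφ1 : φ x₀ = 1)
    (hφodd : ∀ k : ℕ, Odd k → (k : ℤ) ≤ 2 * (N : ℤ) - 1 → iteratedDeriv k φ x₀ = 0)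
    (u : ℂ → ℂ)
    (hu : ∀ᶠ x in nhdsWithin x₀ {x₀}ᶜ, u x = (x - x₀) ^ (N : ℤ) * φ x)
    (hode : ∀ᶠ x in nhdsWithin x₀ {x₀}ᶜ, iteratedDeriv 2 u x + h x * u x = 0) :
    ∃ g' : ℂ → ℂ, AnalyticAt ℂ g' x₀ ∧
      (∀ᶠ x in nhdsWithin x₀ {x₀}ᶜ,
        g' x = (μ - h x - 2 * (deriv u x / u x) ^ 2)
          + ((N + 1) * N : ℂ) / (x - x₀) ^ 2) ∧
      (∀ k : ℕ, Odd k → (k : ℤ) ≤ 2 * (N : ℤ) - 1 → iteratedDeriv k g' x₀ = 0) := by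
  obtain ⟨M, rfl⟩ : ∃ M, N = M + 2 := ⟨N - 2, by omega⟩
  set ψ : ℂ → ℂ := fun y => deriv φ y / φ y with hψdef
  have hφd : AnalyticAt ℂ (deriv φ) x₀ := hφ.deriv'
  have hφ0 : φ x₀ ≠ 0 := by rw [hφ1]; exact one_ne_zero
  have hψ : AnalyticAt ℂ ψ x₀ := hφd.div hφ hφ0
  have hφd0 : deriv φ x₀ = 0 := by
    have := hφodd 1 odd_one (by push_cast; omega)
    rwa [iteratedDeriv_one] at this
  have hψ0 : ψ x₀ = 0 := by simp [hψdef, hφd0]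
  set Ψ : ℂ → ℂ := dslope ψ x₀ with hΨdef
  have hΨ : AnalyticAt ℂ Ψ x₀ := analyticAt_dslope' hψ
  have hΨmul : ∀ y, (y - x₀) * Ψ y = ψ y := by
    intro y
    have := sub_smul_dslope ψ x₀ y
    rw [smul_eq_mul, hψ0, sub_zero] at this
    exact this
  -- eventual nonvanishing of φ
  have hφne : ∀ᶠ y in nhds x₀, φ y ≠ 0 := hφ.continuousAt.eventually_ne hφ0
  -- ψ * φ = deriv φ near x₀
  have hψφ : (fun y => ψ y * φ y) =ᶠ[nhds x₀] deriv φ := by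
    filter_upwards [hφne] with y hy
    simp [hψdef, div_mul_cancel₀ _ hy]
  -- Step A : even derivatives of ψ
  have stepA : ∀ k, Even k → k ≤ 2*M+4 →
      iteratedDeriv k ψ x₀ = iteratedDeriv (k+1) φ x₀ := by
    intro k
    induction k using Nat.strong_induction_on with
    | _ k IH =>
      intro hke hkle
      have h1 : iteratedDeriv k (fun y => ψ y * φ y) x₀ = iteratedDeriv (k+1) φ x₀ := by
        rw [hψφ.iteratedDeriv_eq k, ← iteratedDeriv_succ']
      rw [itd_mul k hψ hφ, Finset.sum_range_succ] at h1
      have hz : ∀ j ∈ range k, ((k.choose j : ℂ) *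
          (iteratedDeriv j ψ x₀ * iteratedDeriv (k-j) φ x₀)) = 0 := by
        intro j hj
        have hjk : j < k := Finset.mem_range.mp hj
        rcases Nat.even_or_odd j with hje | hjo
        · have hj2 : j ≤ 2*M+2 := by
            obtain ⟨a, ha⟩ := hje; obtain ⟨b, hb⟩ := hke; omega
          rw [IH j hjk hje (by omega),
            hφodd (j+1) (by exact hje.add_one) (by push_cast; omega)]
          ring
        · have hkj : Odd (k - j) := Nat.Even.sub_odd (le_of_lt hjk) hke hjo
          have : (↑(k-j) : ℤ) ≤ 2 * (↑(M+2) : ℤ) - 1 := by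
            obtain ⟨a, ha⟩ := hkj; push_cast; omega
          rw [hφodd (k-j) hkj this]; ring
      rw [Finset.sum_eq_zero hz, zero_add, Nat.choose_self, Nat.sub_self,
        iteratedDeriv_zero, hφ1] at h1
      simpa using h1
  have stepA' : ∀ k, Even k → k ≤ 2*M+2 → iteratedDeriv k ψ x₀ = 0 := by
    intro k hke hkle
    rw [stepA k hke (by omega)]
    exact hφodd (k+1) hke.add_one (by obtain ⟨a, ha⟩ := hke; push_cast; omega)
  -- Step B : derivatives of Ψ
  have stepB : ∀ m : ℕ, ((m:ℂ)+1) * iteratedDeriv m Ψ x₀ = iteratedDeriv (m+1) ψ x₀ := by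
    intro m
    have : ψ = fun y => (y - x₀) * Ψ y := by funext y; rw [hΨmul y]
    rw [this, itd_linfac m x₀ hΨ]
  -- helper: iteratedDeriv of deriv
  have itdD : ∀ (n : ℕ) (f : ℂ → ℂ) (y : ℂ),
      iteratedDeriv n (deriv f) y = iteratedDeriv (n+1) f y := by
    intro n f y
    rw [iteratedDeriv_succ']
  -- hypotheses in 𝓝-form
  have hu2 : ∀ᶠ y in nhds x₀, y ≠ x₀ → u y = (y - x₀) ^ (M+2) * φ y := by
    have h0 := eventually_nhdsWithin_iff.mp hu
    filter_upwards [h0] with y hy hyne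
    have := hy hyne
    rwa [zpow_natCast] at this
  have hφa2 : ∀ᶠ x in nhds x₀, ∀ᶠ y in nhds x, AnalyticAt ℂ φ y :=
    hφ.eventually_analyticAt.eventually_nhds
  -- derivative formulas on punctured neighborhood
  have hderivs : ∀ᶠ x in nhdsWithin x₀ {x₀}ᶜ,
      (deriv u x = ((M:ℂ)+2) * (x - x₀)^(M+1) * φ x + (x - x₀)^(M+2) * deriv φ x ∧
      iteratedDeriv 2 u x = ((M:ℂ)+2)*((M:ℂ)+1) * (x - x₀)^M * φ x
        + 2*((M:ℂ)+2) * (x - x₀)^(M+1) * deriv φ x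
        + (x - x₀)^(M+2) * deriv (deriv φ) x) := by
    rw [eventually_nhdsWithin_iff]
    filter_upwards [hu2.eventually_nhds, hφa2] with x Hu Hφ
    intro hxmem
    have hxne : x ≠ x₀ := hxmem
    have hφx : AnalyticAt ℂ φ x := Hφ.self_of_nhds
    have hux : u =ᶠ[nhds x] (fun y => (y - x₀)^(M+2) * φ y) := by
      filter_upwards [Hu, eventually_ne_nhds hxne] with y h1 h2
      exact h1 h2
    have hqev : deriv (fun y => (y - x₀)^(M+2) * φ y) =ᶠ[nhds x]
        (fun y => ((M:ℂ)+2) * (y - x₀)^(M+1) * φ y + (y - x₀)^(M+2) * deriv φ y) := by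
      filter_upwards [Hφ] with y hy
      have h1 := (((hasDerivAt_id y).sub_const x₀).fun_pow (M+2)).fun_mul
        hy.differentiableAt.hasDerivAt
      have h2 := h1.deriv
      simp only [id_eq, show M+2-1 = M+1 from by omega, mul_one] at h2
      rw [h2]; push_cast; ring
    constructor
    · rw [hux.deriv_eq, hqev.self_of_nhds]
    · have e1 : iteratedDeriv 2 u x = deriv (deriv u) x := by
        rw [iteratedDeriv_succ, iteratedDeriv_one]
      rw [e1]
      have hder2 : deriv u =ᶠ[nhds x]
          (fun y => ((M:ℂ)+2) * (y - x₀)^(M+1) * φ y + (y - x₀)^(M+2) * deriv φ y) :=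
        hux.deriv.trans hqev
      rw [hder2.deriv_eq]
      have hφx' : AnalyticAt ℂ (deriv φ) x := hφx.deriv'
      have t1 : HasDerivAt (fun y => ((M:ℂ)+2) * (y - x₀)^(M+1) * φ y)
          ((((M:ℂ)+2) * (((M+1:ℕ):ℂ) * (x - x₀)^M * 1)) * φ x
            + ((M:ℂ)+2) * (x - x₀)^(M+1) * deriv φ x) x := by
        have hp : HasDerivAt (fun y => ((M:ℂ)+2) * (y - x₀)^(M+1))
            (((M:ℂ)+2) * (((M+1:ℕ):ℂ) * (x - x₀)^M * 1)) x := by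
          have := (((hasDerivAt_id x).sub_const x₀).pow (M+1)).const_mul ((M:ℂ)+2)
          simpa using this
        exact hp.mul hφx.differentiableAt.hasDerivAt
      have t2 : HasDerivAt (fun y => (y - x₀)^(M+2) * deriv φ y)
          ((((M+2:ℕ):ℂ) * (x - x₀)^(M+1)) * deriv φ x
            + (x - x₀)^(M+2) * deriv (deriv φ) x) x := by
        have hp := ((hasDerivAt_id x).sub_const x₀).pow (M+2)
        simp only [id_eq, show M+2-1 = M+1 from by omega, mul_one] at hp
        exact hp.mul hφx'.differentiableAt.hasDerivAt
      rw [(t1.fun_add t2).deriv]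
      push_cast; ring
  -- the analytic ODE function W
  set W : ℂ → ℂ := fun y => (y - x₀) * deriv (deriv φ) y
      + (2*((M:ℂ)+2) * deriv φ y + 1 * ((y - x₀) * (g y * φ y))) with hWdef
  have hball : ∀ᶠ x in nhdsWithin x₀ {x₀}ᶜ, x ∈ Metric.ball x₀ r :=
    (Filter.eventually_of_mem (Metric.ball_mem_nhds x₀ hr) (fun y hy => hy)).filter_mono
      nhdsWithin_le_nhds
  have hW0p : ∀ᶠ x in nhdsWithin x₀ {x₀}ᶜ, W x = 0 := by
    filter_upwards [hderivs, hode, hu.filter_mono le_rfl, hball, self_mem_nhdsWithin]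
      with x hd he hux hxb hxne
    have hxne' : x ≠ x₀ := hxne
    obtain ⟨hd1, hd2⟩ := hd
    have ht : x - x₀ ≠ 0 := sub_ne_zero.mpr hxne'
    have hgx := hgh x ⟨hxb, hxne⟩
    have hhx : h x = g x - ((M+2:ℕ):ℂ) * (((M+2:ℕ):ℂ) - 1) / (x - x₀)^2 := by
      rw [hgx]; ring
    have huxx : u x = (x - x₀) ^ (M+2) * φ x := by
      rw [hux]; rw [zpow_natCast]
    rw [hd2, hhx, huxx] at he
    have key : (x - x₀)^(M+1) * W x = 0 := by
      rw [← he, hWdef]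
      field_simp
      push_cast
      ring
    have hp : (x - x₀)^(M+1) ≠ 0 := pow_ne_zero _ ht
    exact (mul_eq_zero.mp key).resolve_left hp
  have hWx₀ : W x₀ = 0 := by
    simp [hWdef, hφd0]
  have hWev : W =ᶠ[nhds x₀] (fun _ => (0:ℂ)) :=
    ev_of_punctured hW0p (by simpa using hWx₀)
  -- analyticity pieces
  have hgφ : AnalyticAt ℂ (fun y => g y * φ y) x₀ := hg.mul hφ
  have A1 : AnalyticAt ℂ (fun y => (y - x₀) * deriv (deriv φ) y) x₀ :=
    (analyticAt_id.sub analyticAt_const).mul hφd.deriv'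
  have A3 : AnalyticAt ℂ (fun y => (y - x₀) * (g y * φ y)) x₀ :=
    (analyticAt_id.sub analyticAt_const).mul hgφ
  -- extract the coefficient identity from W = 0
  have hDW : iteratedDeriv (2*M+4) W x₀ = 0 := by
    rw [hWev.iteratedDeriv_eq]; exact itd_zero _ _
  have hsplit : iteratedDeriv (2*M+4) W x₀
      = iteratedDeriv (2*M+4) (fun y => (y - x₀) * deriv (deriv φ) y) x₀
        + (2*((M:ℂ)+2) * iteratedDeriv (2*M+4) (deriv φ) x₀
          + 1 * iteratedDeriv (2*M+4) (fun y => (y - x₀) * (g y * φ y)) x₀) := by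
    have hGa : AnalyticAt ℂ
        (fun y => 2*((M:ℂ)+2) * deriv φ y + 1 * ((y - x₀) * (g y * φ y))) x₀ := by
      exact (analyticAt_const.mul hφd).add (analyticAt_const.mul A3)
    rw [hWdef]
    rw [itd_add (2*M+4) A1 hGa, itd_comb (2*M+4) (2*((M:ℂ)+2)) 1 hφd A3]
  -- compute the three pieces of hsplit
  have p1 : iteratedDeriv (2*M+4) (fun y => (y - x₀) * deriv (deriv φ) y) x₀
      = (2*(M:ℂ)+4) * iteratedDeriv (2*M+5) φ x₀ := by
    have h1 := itd_linfac (2*M+3) x₀ hφd.deriv'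
    rw [show 2*M+3+1 = 2*M+4 from by omega] at h1
    rw [h1, itdD, itdD, show 2*M+3+1+1 = 2*M+5 from by omega]
    push_cast; ring
  have p2 : iteratedDeriv (2*M+4) (deriv φ) x₀ = iteratedDeriv (2*M+5) φ x₀ := by
    rw [itdD, show 2*M+4+1 = 2*M+5 from by omega]
  have p3 : iteratedDeriv (2*M+3) (fun y => g y * φ y) x₀
      = iteratedDeriv (2*M+3) g x₀ := by
    rw [itd_mul (2*M+3) hg hφ, Finset.sum_range_succ]
    have hz : ∀ j ∈ range (2*M+3), (((2*M+3).choose j : ℂ) *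
        (iteratedDeriv j g x₀ * iteratedDeriv (2*M+3-j) φ x₀)) = 0 := by
      intro j hj
      have hjk : j < 2*M+3 := Finset.mem_range.mp hj
      rcases Nat.even_or_odd j with hje | hjo
      · have ho : Odd (2*M+3-j) := by
          obtain ⟨a, ha⟩ := hje
          exact ⟨M+1-a, by omega⟩
        rw [hφodd _ ho (by obtain ⟨b, hb⟩ := ho; push_cast; omega)]; ring
      · rw [hgodd j hjo (by obtain ⟨b, hb⟩ := hjo; push_cast; omega)]; ring
    rw [Finset.sum_eq_zero hz, zero_add, Nat.choose_self, Nat.sub_self,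
      iteratedDeriv_zero, hφ1]
    simp
  have p4 : iteratedDeriv (2*M+4) (fun y => (y - x₀) * (g y * φ y)) x₀
      = (2*(M:ℂ)+4) * iteratedDeriv (2*M+3) g x₀ := by
    have h1 := itd_linfac (2*M+3) x₀ hgφ
    rw [show 2*M+3+1 = 2*M+4 from by omega] at h1
    rw [h1, p3]; push_cast; ring
  have hX := hDW
  rw [hsplit, p1, p2, p4] at hX
  have hc : (2*(M:ℂ)+4) ≠ 0 := by
    have : ((2*M+4 : ℕ):ℂ) ≠ 0 := Nat.cast_ne_zero.mpr (by omega)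
    push_cast at this; convert this using 2 <;> push_cast <;> ring
  have hgkey : iteratedDeriv (2*M+3) g x₀ = -2 * iteratedDeriv (2*M+5) φ x₀ := by
    have h2 : (2*(M:ℂ)+4) * (iteratedDeriv (2*M+3) g x₀
        + 2 * iteratedDeriv (2*M+5) φ x₀) = 0 := by linear_combination hX
    have h3 := (mul_eq_zero.mp h2).resolve_left hc
    linear_combination h3
  -- the lift
  refine ⟨fun y => μ * 1 + 1 * ((-1) * g y
      + 1 * ((-(4*((M:ℂ)+2))) * Ψ y + (-2) * (ψ y * ψ y))), ?_, ?_, ?_⟩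
  · exact analyticAt_const.add (analyticAt_const.mul ((analyticAt_const.mul hg).add
      (analyticAt_const.mul ((analyticAt_const.mul hΨ).add
        (analyticAt_const.mul (hψ.mul hψ))))))
  · filter_upwards [hderivs, hu, hball, self_mem_nhdsWithin,
      (hφne.filter_mono nhdsWithin_le_nhds)] with x hd hux hxb hxne hφnz
    have hxne' : x ≠ x₀ := hxne
    have ht : x - x₀ ≠ 0 := sub_ne_zero.mpr hxne'
    obtain ⟨hd1, -⟩ := hd
    have huxx : u x = (x - x₀) ^ (M+2) * φ x := by rw [hux, zpow_natCast]
    have hratio : deriv u x / u x = ((M:ℂ)+2)/(x - x₀) + ψ x := by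
      rw [hd1, huxx, hψdef]
      field_simp
      ring
    have hΨx : Ψ x = ψ x / (x - x₀) := by
      rw [eq_div_iff ht, mul_comm]; exact hΨmul x
    have hgx := hgh x ⟨hxb, hxne⟩
    have hhx : h x = g x - ((M+2:ℕ):ℂ) * (((M+2:ℕ):ℂ) - 1) / (x - x₀)^2 := by
      rw [hgx]; ring
    rw [hratio, hΨx, hhx, hψdef]
    push_cast
    field_simp
    ring
  · intro k hk hkle
    have hkle' : k ≤ 2*M+3 := by push_cast at hkle; omega
    have hk1 : k ≠ 0 := by rintro rfl; exact (Nat.not_odd_iff_even.mpr Even.zero) hk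
    have cinner2 : AnalyticAt ℂ
        (fun y => (-(4*((M:ℂ)+2))) * Ψ y + (-2) * (ψ y * ψ y)) x₀ :=
      (analyticAt_const.mul hΨ).add (analyticAt_const.mul (hψ.mul hψ))
    have cinner1 : AnalyticAt ℂ (fun y => (-1) * g y
        + 1 * ((-(4*((M:ℂ)+2))) * Ψ y + (-2) * (ψ y * ψ y))) x₀ :=
      (analyticAt_const.mul hg).add (analyticAt_const.mul cinner2)
    rw [itd_comb k μ 1 (analyticAt_const (v := (1:ℂ))) cinner1,
      itd_comb k (-1) 1 hg cinner2,
      itd_comb k (-(4*((M:ℂ)+2))) (-2) hΨ (hψ.fun_mul hψ),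
      itd_const k hk1]
    have hψψ : iteratedDeriv k (fun y => ψ y * ψ y) x₀ = 0 := by
      rw [itd_mul k hψ hψ]
      refine Finset.sum_eq_zero fun j hj => ?_
      have hjk : j ≤ k := Nat.lt_succ_iff.mp (Finset.mem_range.mp hj)
      rcases Nat.even_or_odd j with hje | hjo
      · rw [stepA' j hje (by obtain ⟨a,ha⟩ := hje; obtain ⟨b,hb⟩ := hk; omega)]
        ring
      · have hev : Even (k - j) := Nat.Odd.sub_odd hk hjo
        rw [stepA' (k-j) hev (by obtain ⟨a,ha⟩ := hev; omega)]
        ring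
    rw [hψψ]
    rcases (show k ≤ 2*M+1 ∨ k = 2*M+3 from by obtain ⟨a,ha⟩ := hk; omega)
      with hcase | hcase
    · have hgz : iteratedDeriv k g x₀ = 0 :=
        hgodd k hk (by push_cast; omega)
      have hΨz : iteratedDeriv k Ψ x₀ = 0 := by
        have hsb := stepB k
        rw [stepA' (k+1) hk.add_one (by omega)] at hsb
        have hne : ((k:ℂ)+1) ≠ 0 := Nat.cast_add_one_ne_zero k
        exact (mul_eq_zero.mp hsb).resolve_left hne
      rw [hgz, hΨz]; ring
    · subst hcase
      have hΨv : (2*(M:ℂ)+4) * iteratedDeriv (2*M+3) Ψ x₀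
          = iteratedDeriv (2*M+5) φ x₀ := by
        have hsb := stepB (2*M+3)
        rw [show 2*M+3+1 = 2*M+4 from by omega] at hsb
        rw [stepA (2*M+4) (by exact ⟨M+2, by omega⟩) (by omega)] at hsb
        rw [show 2*M+4+1 = 2*M+5 from by omega] at hsb
        rw [← hsb]; push_cast; ring
      have hΨv' : iteratedDeriv (2*M+3) Ψ x₀
          = iteratedDeriv (2*M+5) φ x₀ / (2*(M:ℂ)+4) := by
        rw [eq_div_iff hc, mul_comm]; exact hΨv
      rw [hgkey, hΨv']
      field_simp
      ring
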